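/- Let R be a Jacobi-Tsankov algebraic curvature tensor on V. If x ⊥ y are unit vectors with J(x)y = 0, then J(y)x = 0 and J(x)J(y) = 0. -/
import Mathlib


open scoped InnerProductSpace
noncomputable section

variable {V : Type*} [NormedAddCommGroup V] [InnerProductSpace ℝ V]

/-- `R` satisfies the symmetries of an algebraic curvature tensor. -/
def IsCurvatureOperator (R : V →ₗ[ℝ] V →ₗ[ℝ] V →ₗ[ℝ] V) : Prop :=
  (∀ x y z w : V, ⟪R x y z, w⟫_ℝ = ⟪R z w x, y⟫_ℝ) ∧
  (∀ x y z w : V, ⟪R x y z, w⟫_ℝ = - ⟪R y x z, w⟫_ℝ) ∧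
  (∀ x y z w : V, ⟪R x y z, w⟫_ℝ + ⟪R y z x, w⟫_ℝ + ⟪R z x y, w⟫_ℝ = 0)

/-- The Jacobi operator `J(x) : y ↦ R(y,x)x`. -/
def Jacobi (R : V →ₗ[ℝ] V →ₗ[ℝ] V →ₗ[ℝ] V) (x : V) : V →ₗ[ℝ] V where
  toFun y := R y x x
  map_add' a b := by simp
  map_smul' c a := by simp

/-- The polarized Jacobi operator `J(x,y) : z ↦ ½R(z,x)y + ½R(z,y)x`. -/
def JacobiP (R : V →ₗ[ℝ] V →ₗ[ℝ] V →ₗ[ℝ] V) (x y : V) : V →ₗ[ℝ] V where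
  toFun z := (1/2 : ℝ) • R z x y + (1/2 : ℝ) • R z y x
  map_add' a b := by simp; module
  map_smul' c a := by simp; module

/-- `R` is Jacobi-Tsankov: Jacobi operators of orthogonal vectors commute. -/
def JacobiTsankov (R : V →ₗ[ℝ] V →ₗ[ℝ] V →ₗ[ℝ] V) : Prop :=
  ∀ x y : V, ⟪x, y⟫_ℝ = 0 → Jacobi R x ∘ₗ Jacobi R y = Jacobi R y ∘ₗ Jacobi R x

namespace Stmt10Aux

variable {R : V →ₗ[ℝ] V →ₗ[ℝ] V →ₗ[ℝ] V}

lemma jacobi_apply (R : V →ₗ[ℝ] V →ₗ[ℝ] V →ₗ[ℝ] V) (a z : V) : Jacobi R a z = R z a a := rfl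

lemma jacobiP_apply (R : V →ₗ[ℝ] V →ₗ[ℝ] V →ₗ[ℝ] V) (a b z : V) :
    JacobiP R a b z = (1/2 : ℝ) • R z a b + (1/2 : ℝ) • R z b a := rfl

lemma curv_antisym2 (hR : IsCurvatureOperator R) (a b c d : V) :
    ⟪R a b c, d⟫_ℝ = - ⟪R a b d, c⟫_ℝ := by
  rw [hR.1 a b c d, hR.2.1 c d a b, hR.1 d c a b]

lemma curv_antisym1_vec (hR : IsCurvatureOperator R) (a b c : V) : R a b c = - R b a c := by
  apply ext_inner_right ℝ
  intro w
  rw [inner_neg_left]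
  exact hR.2.1 a b c w

lemma curv_aa (hR : IsCurvatureOperator R) (a b : V) : R a a b = 0 := by
  apply ext_inner_right ℝ
  intro w
  have h := hR.2.1 a a b w
  simp only [inner_zero_left]
  linarith

lemma jacobi_self (hR : IsCurvatureOperator R) (a : V) : Jacobi R a a = 0 :=
  curv_aa hR a a

lemma jacobi_symm (hR : IsCurvatureOperator R) (v : V) : (Jacobi R v).IsSymmetric := by
  intro a b
  show ⟪R a v v, b⟫_ℝ = ⟪a, R b v v⟫_ℝ
  rw [hR.1 a v v b, hR.2.1 v b a v, curv_antisym2 hR b v a v, neg_neg, real_inner_comm]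

lemma jacobiP_eq (R : V →ₗ[ℝ] V →ₗ[ℝ] V →ₗ[ℝ] V) (a b : V) :
    JacobiP R a b = (1/2 : ℝ) • (Jacobi R (a+b) - Jacobi R a - Jacobi R b) := by
  ext z
  show (1/2 : ℝ) • R z a b + (1/2 : ℝ) • R z b a
      = (1/2 : ℝ) • (R z (a+b) (a+b) - R z a a - R z b b)
  simp only [map_add, LinearMap.add_apply]
  module

lemma jacobiP_symm (hR : IsCurvatureOperator R) (a b : V) : (JacobiP R a b).IsSymmetric := by
  intro z w
  rw [jacobiP_eq]
  simp only [LinearMap.smul_apply, LinearMap.sub_apply, real_inner_smul_left,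
    real_inner_smul_right, inner_sub_left, inner_sub_right]
  rw [jacobi_symm hR (a+b) z w, jacobi_symm hR a z w, jacobi_symm hR b z w]

lemma jacobiP_snd (hR : IsCurvatureOperator R) (a b : V) :
    JacobiP R a b b = -(1/2 : ℝ) • Jacobi R b a := by
  show (1/2 : ℝ) • R b a b + (1/2 : ℝ) • R b b a = -(1/2 : ℝ) • R a b b
  rw [curv_aa hR b a, curv_antisym1_vec hR b a b]
  module

lemma jacobi_expand (R : V →ₗ[ℝ] V →ₗ[ℝ] V →ₗ[ℝ] V) (a b z : V) :
    Jacobi R (a+b) z = Jacobi R a z + Jacobi R b z + (2:ℝ) • JacobiP R a b z := by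
  show R z (a+b) (a+b) = R z a a + R z b b + (2:ℝ) • ((1/2 : ℝ) • R z a b + (1/2 : ℝ) • R z b a)
  simp only [map_add, LinearMap.add_apply]
  module

lemma jacobi_expand_sub (R : V →ₗ[ℝ] V →ₗ[ℝ] V →ₗ[ℝ] V) (a b z : V) :
    Jacobi R (a-b) z = Jacobi R a z + Jacobi R b z - (2:ℝ) • JacobiP R a b z := by
  show R z (a-b) (a-b) = R z a a + R z b b - (2:ℝ) • ((1/2 : ℝ) • R z a b + (1/2 : ℝ) • R z b a)
  simp only [map_sub, LinearMap.sub_apply]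
  module


lemma eigen_lemma (hR : IsCurvatureOperator R) (hT : JacobiTsankov R) {q e : V}
    (hq : ‖q‖ = 1) (he : ‖e‖ = 1) (hqe : ⟪q, e⟫_ℝ = 0) {α : ℝ}
    (h : Jacobi R q e = α • e) : Jacobi R e q = α • q := by
  set u := Jacobi R e q with hu
  have horth : ⟪q + e, q - e⟫_ℝ = 0 := by
    simp [inner_add_left, inner_sub_right, real_inner_comm e q, hqe,
      real_inner_self_eq_norm_sq, hq, he]
    ring
  have hPq : JacobiP R q e q = (-(α/2)) • e := by
    show (1/2:ℝ) • R q q e + (1/2:ℝ) • R q e q = _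
    rw [curv_aa hR q e, curv_antisym1_vec hR q e q]
    have hh : R e q q = α • e := h
    rw [hh]; module
  have hPe : JacobiP R q e e = -(1/2 : ℝ) • u := by rw [jacobiP_snd hR q e, ← hu]
  have hqq : Jacobi R q q = 0 := jacobi_self hR q
  have hee : Jacobi R e e = 0 := jacobi_self hR e
  have hcomm := hT (q+e) (q-e) horth
  have hcq : Jacobi R (q+e) (Jacobi R (q-e) q) = Jacobi R (q-e) (Jacobi R (q+e) q) := by
    have := congrArg (fun g => g q) hcomm
    simpa using this
  have h1 : Jacobi R (q-e) q = u + α • e := by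
    rw [jacobi_expand_sub, hqq, hPq, ← hu]; module
  have h2 : Jacobi R (q+e) q = u - α • e := by
    rw [jacobi_expand, hqq, hPq, ← hu]; module
  have h3 : Jacobi R (q+e) e = α • e - u := by
    rw [jacobi_expand, h, hee, hPe]; module
  have h4 : Jacobi R (q-e) e = α • e + u := by
    rw [jacobi_expand_sub, h, hee, hPe]; module
  have h5 : Jacobi R (q+e) (u + α • e) = Jacobi R (q-e) (u - α • e) := by
    rw [← h1, ← h2]; exact hcq
  rw [map_add, map_sub, map_smul, map_smul, h3, h4, jacobi_expand, jacobi_expand_sub] at h5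
  -- h5 : Jq u + Je u + 2•P u + α•(α•e − u) = (Jq u + Je u − 2•P u) − α•(α•e + u)
  have hPu : JacobiP R q e u = (-(α^2/2)) • e := by
    have h7 : (4:ℝ) • JacobiP R q e u = ((-2)*α^2) • e := by
      linear_combination (norm := module) h5
    linear_combination (norm := module) ((1:ℝ)/4) • h7
  have hee1 : ⟪e, e⟫_ℝ = 1 := by rw [real_inner_self_eq_norm_sq, he]; norm_num
  have hqq1 : ⟪q, q⟫_ℝ = 1 := by rw [real_inner_self_eq_norm_sq, hq]; norm_num
  have hl : ⟪JacobiP R q e u, e⟫_ℝ = -(α^2/2) := by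
    rw [hPu, real_inner_smul_left, hee1]; ring
  have hr : ⟪u, JacobiP R q e e⟫_ℝ = -(1/2) * ⟪u, u⟫_ℝ := by
    rw [hPe, real_inner_smul_right]
  have h8 : ⟪u, u⟫_ℝ = α^2 := by
    have := jacobiP_symm hR q e u e
    rw [hl, hr] at this
    linarith
  have h10 : ⟪u, q⟫_ℝ = α := by
    have hpair : ⟪R q e e, q⟫_ℝ = ⟪R e q q, e⟫_ℝ := hR.1 q e e q
    have he2 : R e q q = α • e := h
    rw [he2, real_inner_smul_left, hee1, mul_one] at hpair
    calc ⟪u, q⟫_ℝ = ⟪R q e e, q⟫_ℝ := rfl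
    _ = α := hpair
  have hz : ⟪u - α • q, u - α • q⟫_ℝ = 0 := by
    simp only [inner_sub_left, inner_sub_right, real_inner_smul_left, real_inner_smul_right]
    have h10' : ⟪q, u⟫_ℝ = α := by rw [real_inner_comm]; exact h10
    rw [h8, h10, h10', hqq1]; ring
  have h12 : u = α • q := sub_eq_zero.mp (inner_self_eq_zero.mp hz)
  exact h12

end Stmt10Aux

theorem stmt10 [FiniteDimensional ℝ V] (hm : 3 ≤ Module.finrank ℝ V)
    (R : V →ₗ[ℝ] V →ₗ[ℝ] V →ₗ[ℝ] V) (hR : IsCurvatureOperator R)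
    (hT : JacobiTsankov R) (x y : V) (hx : ‖x‖ = 1) (hy : ‖y‖ = 1)
    (hxy : ⟪x, y⟫_ℝ = 0) (h0 : Jacobi R x y = 0) :
    Jacobi R y x = 0 ∧ Jacobi R x ∘ₗ Jacobi R y = 0 := by
  have hA : (Jacobi R x).IsSymmetric := Stmt10Aux.jacobi_symm hR x
  have hB : (Jacobi R y).IsSymmetric := Stmt10Aux.jacobi_symm hR y
  have hxx : Jacobi R x x = 0 := Stmt10Aux.jacobi_self hR x
  have part1 : Jacobi R y x = 0 := by
    have := Stmt10Aux.eigen_lemma hR hT hx hy hxy (α := 0) (by rw [h0, zero_smul])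
    simpa using this
  refine ⟨part1, ?_⟩
  have hABc : Commute (Jacobi R x) (Jacobi R y) := by
    show Jacobi R x * Jacobi R y = Jacobi R y * Jacobi R x
    rw [Module.End.mul_eq_comp, Module.End.mul_eq_comp]
    exact hT x y hxy
  have htop := LinearMap.IsSymmetric.iSup_iSup_eigenspace_inf_eigenspace_eq_top_of_commute
    hA hB hABc
  have hker : ∀ (α γ : ℝ) (v : V),
      v ∈ Module.End.eigenspace (Jacobi R x) α ⊓ Module.End.eigenspace (Jacobi R y) γ →
      Jacobi R x (Jacobi R y v) = 0 := by
    intro α γ v hv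
    obtain ⟨hv1, hv2⟩ := Submodule.mem_inf.mp hv
    have hAv : Jacobi R x v = α • v := Module.End.mem_eigenspace_iff.mp hv1
    have hBv : Jacobi R y v = γ • v := Module.End.mem_eigenspace_iff.mp hv2
    rw [hBv, map_smul, hAv, smul_smul]
    rcases eq_or_ne α 0 with hα | hα
    · rw [hα]; simp
    rcases eq_or_ne γ 0 with hγ | hγ
    · rw [hγ]; simp
    rcases eq_or_ne v 0 with hv0 | hv0
    · rw [hv0]; simp
    exfalso
    have hvx : ⟪v, x⟫_ℝ = 0 := by
      have h1 : α * ⟪v, x⟫_ℝ = 0 := by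
        rw [← real_inner_smul_left, ← hAv, hA v x, hxx, inner_zero_right]
      exact (mul_eq_zero.mp h1).resolve_left hα
    have hvy : ⟪v, y⟫_ℝ = 0 := by
      have h1 : α * ⟪v, y⟫_ℝ = 0 := by
        rw [← real_inner_smul_left, ← hAv, hA v y, h0, inner_zero_right]
      exact (mul_eq_zero.mp h1).resolve_left hα
    set f : V := ‖v‖⁻¹ • v with hf
    have hnv : ‖v‖ ≠ 0 := norm_ne_zero_iff.mpr hv0
    have hf1 : ‖f‖ = 1 := by
      rw [hf, norm_smul, norm_inv, norm_norm]
      field_simp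
    have hAf : Jacobi R x f = α • f := by rw [hf, map_smul, hAv, smul_comm]
    have hBf : Jacobi R y f = γ • f := by rw [hf, map_smul, hBv, smul_comm]
    have hyf : ⟪y, f⟫_ℝ = 0 := by
      rw [hf, real_inner_smul_right, real_inner_comm, hvy, mul_zero]
    have hfy : Jacobi R f y = γ • y := Stmt10Aux.eigen_lemma hR hT hy hf1 hyf hBf
    have hxf : ⟪x, f⟫_ℝ = 0 := by
      rw [hf, real_inner_smul_right, real_inner_comm, hvx, mul_zero]
    have hxyf : ⟪x, y + f⟫_ℝ = 0 := by rw [inner_add_right, hxy, hxf, add_zero]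
    have c1 := congrArg (fun g => g f) (hT x y hxy)
    have c2 := congrArg (fun g => g f) (hT x f hxf)
    have c3 := congrArg (fun g => g f) (hT x (y+f) hxyf)
    simp only [LinearMap.comp_apply] at c1 c2 c3
    have hexp : ∀ z, (2:ℝ) • JacobiP R y f z
        = Jacobi R (y+f) z - Jacobi R y z - Jacobi R f z := by
      intro z
      rw [Stmt10Aux.jacobi_expand]
      module
    have hkey : Jacobi R x ((2:ℝ) • JacobiP R y f f)
        = (2:ℝ) • JacobiP R y f (Jacobi R x f) := by
      rw [hexp f, map_sub, map_sub, c3, c1, c2, ← hexp (Jacobi R x f)]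
    have hTff : JacobiP R y f f = (-(γ/2)) • y := by
      rw [Stmt10Aux.jacobiP_snd hR y f, hfy]; module
    rw [hTff, hAf, map_smul, map_smul, h0, map_smul, hTff] at hkey
    have hz : (α * γ) • y = 0 := by
      linear_combination (norm := module) hkey
    have hy0 : y ≠ 0 := fun hh => by rw [hh, norm_zero] at hy; exact one_ne_zero hy.symm
    rcases smul_eq_zero.mp hz with h | h
    · rcases mul_eq_zero.mp h with h' | h'
      · exact hα h'
      · exact hγ h'
    · exact hy0 h
  have hle : (⊤ : Submodule ℝ V) ≤ LinearMap.ker (Jacobi R x ∘ₗ Jacobi R y) := by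
    rw [← htop]
    refine iSup_le fun α => iSup_le fun γ => ?_
    intro v hv
    exact LinearMap.mem_ker.mpr (hker α γ v hv)
  exact LinearMap.ker_eq_top.mp (top_le_iff.mp hle)
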